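/- Let A be a Hopf algebra over a field k with bijective antipode S. If M is an injective left A^e-module (equivalently an injective A-bimodule), then the left adjoint module L(M), i.e. M with A-action a·m = Σ a₁ m S(a₂), is an injective left A-module. -/

import Mathlib

/-!
STATEMENT 12: Let `A` be a Hopf algebra over `k` with bijective antipode `S`.  If
`M` is an injective left `A^e`-module (`A^e = A ⊗ Aᵐᵒᵖ`), then the left adjoint
module `L(M)` — the space `M` with `A`-action `a · m = Σ a₁ m S(a₂)`, i.e. the
restriction of `M` along `a ↦ Σ a₁ ⊗ (S a₂)ᵒᵖ` — is an injective left `A`-module.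
-/

open TensorProduct CategoryTheory MulOpposite

noncomputable section

variable (k A : Type) [Field k] [Ring A] [HopfAlgebra k A]

/-- The linear map `a ↦ Σ a₁ ⊗ (S a₂)ᵒᵖ : A → A ⊗ Aᵐᵒᵖ`; scalar action by its values
gives the left adjoint action `a · m = Σ a₁ m S(a₂)` on any `A^e`-module. -/
def adMap : A →ₗ[k] A ⊗[k] Aᵐᵒᵖ :=
  (TensorProduct.map LinearMap.id
    ((opLinearEquiv k).toLinearMap ∘ₗ (HopfAlgebra.antipode (R := k) (A := A)))) ∘ₗ Coalgebra.comul

end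

set_option linter.unusedSectionVars false
set_option linter.unnecessarySimpa false

open TensorProduct CategoryTheory MulOpposite Coalgebra HopfAlgebra LinearMap

section Aux



noncomputable section

variable {k A : Type} [Field k] [Ring A] [HopfAlgebra k A]

lemma aux_sum_counit_smul (a : A) (r : Coalgebra.Repr k a (A × A)) :
    ∑ i ∈ r.index, counit (R := k) (r.right i) • r.left i = a := by
  have h := congrArg (TensorProduct.rid k A) (Coalgebra.sum_tmul_counit_eq (R := k) r)
  rw [map_sum] at h
  simpa only [rid_tmul, one_smul] using h

lemma aux_sum_tmul_algCounit (a : A) (r : Coalgebra.Repr k a (A × A)) :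
    ∑ i ∈ r.index, r.left i ⊗ₜ[k] (algebraMap k A (counit (R := k) (r.right i)))
      = a ⊗ₜ[k] (1 : A) := by
  simp_rw [Algebra.algebraMap_eq_smul_one, tmul_smul, smul_tmul', ← TensorProduct.sum_tmul,
    aux_sum_counit_smul]

lemma aux_sum_algCounit_tmul (a : A) (r : Coalgebra.Repr k a (A × A)) :
    ∑ i ∈ r.index, (algebraMap k A (counit (R := k) (r.right i))) ⊗ₜ[k] r.left i
      = (1 : A) ⊗ₜ[k] a := by
  simp_rw [Algebra.algebraMap_eq_smul_one, smul_tmul, ← TensorProduct.tmul_sum,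
    aux_sum_counit_smul]

end
noncomputable section
variable {k A : Type} [Field k] [Ring A] [HopfAlgebra k A]

lemma aux_key1 (a : A) (r : Coalgebra.Repr k a (A × A)) (r1 : ∀ i, Coalgebra.Repr k (r.left i) (A × A)) :
    ∑ i ∈ r.index, ∑ j ∈ (r1 i).index,
      (r1 i).left j ⊗ₜ[k] (antipode (R := k) ((r1 i).right j) * r.right i)
      = a ⊗ₜ[k] (1 : A) := by
  have h := congrArg
      (LinearMap.lTensor A ((LinearMap.mul' k A) ∘ₗ (LinearMap.rTensor A (antipode (R := k)))))
      (Coalgebra.sum_tmul_tmul_eq (R := k) r r1 (fun i => ℛ k (r.right i)))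
  simp only [map_sum, lTensor_tmul, LinearMap.comp_apply, rTensor_tmul,
    mul'_apply] at h
  rw [h]
  simp_rw [← TensorProduct.tmul_sum, HopfAlgebra.sum_antipode_mul_eq_algebraMap_counit]
  exact aux_sum_tmul_algCounit a r

lemma aux_key2 (a : A) (r : Coalgebra.Repr k a (A × A)) (r1 : ∀ i, Coalgebra.Repr k (r.left i) (A × A)) :
    ∑ i ∈ r.index, ∑ j ∈ (r1 i).index,
      (((r1 i).right j) * antipode (R := k) (r.right i)) ⊗ₜ[k] ((r1 i).left j)
      = (1 : A) ⊗ₜ[k] a := by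
  have h := congrArg
      ((TensorProduct.comm k A A).toLinearMap ∘ₗ
        LinearMap.lTensor A ((LinearMap.mul' k A) ∘ₗ (LinearMap.lTensor A (antipode (R := k)))))
      (Coalgebra.sum_tmul_tmul_eq (R := k) r r1 (fun i => ℛ k (r.right i)))
  simp only [map_sum, LinearMap.comp_apply, lTensor_tmul, mul'_apply,
    LinearEquiv.coe_coe, TensorProduct.comm_tmul] at h
  rw [h]
  simp_rw [← TensorProduct.sum_tmul, HopfAlgebra.sum_mul_antipode_eq_algebraMap_counit]
  exact aux_sum_algCounit_tmul a r

end


noncomputable section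

variable (k A : Type) [Field k] [Ring A] [HopfAlgebra k A]

variable {k A}

lemma aux_antipode_one : antipode (R := k) (1 : A) = 1 := by
  have h := HopfAlgebra.mul_antipode_rTensor_comul_apply (R := k) (A := A) 1
  have hc : Coalgebra.comul (R := k) (1 : A) = 1 ⊗ₜ[k] 1 := by
    simpa [Algebra.TensorProduct.one_def] using (Bialgebra.comulAlgHom k A).map_one
  rw [hc] at h
  simpa using h

lemma aux_adMap_repr (a : A) (r : Coalgebra.Repr k a (A × A)) :
    adMap k A a = ∑ i ∈ r.index, r.left i ⊗ₜ[k] (op (antipode (R := k) (r.right i))) := by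
  rw [adMap, LinearMap.comp_apply, ← r.eq, map_sum]
  rfl

lemma aux_adMap_algebraMap (c : k) :
    adMap k A (algebraMap k A c) = algebraMap k (A ⊗[k] Aᵐᵒᵖ) c := by
  rw [adMap, LinearMap.comp_apply]
  have hc : Coalgebra.comul (R := k) (algebraMap k A c) = algebraMap k (A ⊗[k] A) c := by
    simpa using (Bialgebra.comulAlgHom k A).commutes c
  rw [hc, Algebra.TensorProduct.algebraMap_apply, Algebra.TensorProduct.algebraMap_apply]
  simp [aux_antipode_one]

end


noncomputable section

variable (k A : Type) [Field k] [Ring A] [HopfAlgebra k A]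
variable (X : Type) [AddCommGroup X] [Module k X] [Module A X] [IsScalarTower k A X]

/-- the diagonal (comul-twisted, legs swapped) action of `A` on `A ⊗ X`, as an algebra hom. -/
def diagAlgHom : A →ₐ[k] Module.End k (A ⊗[k] X) :=
  ((Module.endTensorEndAlgHom (R := k) (S := k) (A := k) (M := A) (N := X)).comp
    ((Algebra.TensorProduct.map (Algebra.lsmul k k A) (Algebra.lsmul k k X)).comp
      ((Algebra.TensorProduct.comm k A A).toAlgHom.comp (Bialgebra.comulAlgHom k A))))

lemma diagAlgHom_tmul (a : A) (r : Coalgebra.Repr k a (A × A)) (u : A) (x : X) :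
    diagAlgHom k A X a (u ⊗ₜ[k] x)
      = ∑ i ∈ r.index, (r.right i * u) ⊗ₜ[k] (r.left i • x) := by
  simp only [diagAlgHom, AlgHom.comp_apply]
  rw [show (Bialgebra.comulAlgHom k A a) = Coalgebra.comul (R := k) a from rfl, ← r.eq]
  simp only [map_sum, AlgEquiv.toAlgHom_eq_coe, AlgHom.coe_coe,
    Algebra.TensorProduct.comm_tmul, Algebra.TensorProduct.map_tmul]
  simp only [LinearMap.sum_apply]
  refine Finset.sum_congr rfl fun i _ => ?_
  rw [AlgEquiv.coe_algHom, Algebra.TensorProduct.comm_tmul, Algebra.TensorProduct.map_tmul,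
    Module.endTensorEndAlgHom_apply, TensorProduct.AlgebraTensorModule.map_tmul]
  rfl

end
noncomputable section
variable (k A : Type) [Field k] [Ring A] [HopfAlgebra k A]
variable (X : Type) [AddCommGroup X] [Module k X] [Module A X] [IsScalarTower k A X]

/-- The induced bimodule `A ⊗ X` (a type synonym to carry the nonstandard actions). -/
def Ind : Type := A ⊗[k] X

namespace Ind

instance : AddCommGroup (Ind k A X) := inferInstanceAs (AddCommGroup (A ⊗[k] X))
instance : Module k (Ind k A X) := inferInstanceAs (Module k (A ⊗[k] X))
instance : Module Aᵐᵒᵖ (Ind k A X) := inferInstanceAs (Module Aᵐᵒᵖ (A ⊗[k] X))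
instance : IsScalarTower k Aᵐᵒᵖ (Ind k A X) :=
  inferInstanceAs (IsScalarTower k Aᵐᵒᵖ (A ⊗[k] X))

variable {k A X}

/-- pure tensors in `Ind`. -/
def mk (u : A) (x : X) : Ind k A X := (u ⊗ₜ[k] x : A ⊗[k] X)

variable (k A X)

lemma induction_on {P : Ind k A X → Prop} (n : Ind k A X) (zero : P 0)
    (tmul : ∀ u x, P (mk u x)) (add : ∀ m n, P m → P n → P (m + n)) : P n :=
  TensorProduct.induction_on (motive := P) n zero tmul add

instance instModuleA : Module A (Ind k A X) where
  smul a n := diagAlgHom k A X a n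
  one_smul n := by show diagAlgHom k A X 1 n = n; rw [map_one]; rfl
  mul_smul a b n := by
    show diagAlgHom k A X (a * b) n = diagAlgHom k A X a (diagAlgHom k A X b n)
    rw [map_mul]; rfl
  smul_zero a := map_zero _
  smul_add a m n := map_add _ _ _
  add_smul a b n := by
    show diagAlgHom k A X (a + b) n = diagAlgHom k A X a n + diagAlgHom k A X b n
    rw [map_add]; rfl
  zero_smul n := by show diagAlgHom k A X 0 n = 0; rw [map_zero]; rfl

variable {k A X}

lemma smul_def (a : A) (n : Ind k A X) : a • n = diagAlgHom k A X a n := rfl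

lemma smul_mk (a : A) (r : Coalgebra.Repr k a (A × A)) (u : A) (x : X) :
    a • (mk u x : Ind k A X) = ∑ i ∈ r.index, mk (r.right i * u) (r.left i • x) :=
  diagAlgHom_tmul k A X a r u x

lemma mop_smul_mk (q : Aᵐᵒᵖ) (u : A) (x : X) :
    q • (mk u x : Ind k A X) = mk (u * unop q) x := by
  show q • (u ⊗ₜ[k] x) = (u * unop q) ⊗ₜ[k] x
  rw [TensorProduct.smul_tmul']
  rfl

variable (k A X)

instance : IsScalarTower k A (Ind k A X) := by
  refine ⟨fun c a n => ?_⟩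
  show diagAlgHom k A X (c • a) n = c • diagAlgHom k A X a n
  rw [Algebra.smul_def, map_mul, AlgHom.commutes]
  rfl

instance : SMulCommClass A Aᵐᵒᵖ (Ind k A X) := by
  refine ⟨fun a q n => ?_⟩
  induction n using Ind.induction_on with
  | zero => simp
  | tmul u x =>
      rw [mop_smul_mk, smul_mk a (ℛ k a), smul_mk a (ℛ k a), Finset.smul_sum]
      refine Finset.sum_congr rfl fun i _ => ?_
      rw [mop_smul_mk, mul_assoc]
  | add m n hm hn => rw [smul_add, smul_add, hm, hn, ← smul_add, ← smul_add]

instance instModuleE : Module (A ⊗[k] Aᵐᵒᵖ) (Ind k A X) := TensorProduct.Algebra.module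

variable {k A X}

lemma tmul_smul_ind (p : A) (q : Aᵐᵒᵖ) (n : Ind k A X) :
    (p ⊗ₜ[k] q) • n = p • (q • n) := rfl

end Ind
end
noncomputable section
variable {k A : Type} [Field k] [Ring A] [HopfAlgebra k A]
variable {X : Type} [AddCommGroup X] [Module k X] [Module A X] [IsScalarTower k A X]

/-- `a ↦ a • x` as a `k`-linear map. -/
def smulAt (x : X) : A →ₗ[k] X where
  toFun a := a • x
  map_add' a b := add_smul a b x
  map_smul' c a := smul_assoc c a x

lemma aux_key2X (a : A) (r : Coalgebra.Repr k a (A × A)) (r1 : ∀ i, Coalgebra.Repr k (r.left i) (A × A))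
    (x : X) :
    ∑ i ∈ r.index, ∑ j ∈ (r1 i).index,
      ((((r1 i).right j) * antipode (R := k) (r.right i)) ⊗ₜ[k] (((r1 i).left j) • x)
        : A ⊗[k] X)
      = (1 : A) ⊗ₜ[k] (a • x) := by
  have h := congrArg (LinearMap.lTensor A (smulAt x)) (aux_key2 a r r1)
  simpa only [map_sum, lTensor_tmul, smulAt, LinearMap.coe_mk, AddHom.coe_mk] using h

lemma aux_key1E (a : A) (r : Coalgebra.Repr k a (A × A)) (r1 : ∀ i, Coalgebra.Repr k (r.left i) (A × A))
    (w : A) :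
    (∑ i ∈ r.index, ∑ j ∈ (r1 i).index,
      ((r1 i).left j ⊗ₜ[k] op (antipode (R := k) ((r1 i).right j) * r.right i * w))
        : A ⊗[k] Aᵐᵒᵖ)
      = a ⊗ₜ[k] op w := by
  have h := congrArg
      (LinearMap.lTensor A ((opLinearEquiv k (M := A)).toLinearMap ∘ₗ (LinearMap.mulRight k w)))
      (aux_key1 a r r1)
  simpa only [map_sum, lTensor_tmul, LinearMap.comp_apply, LinearMap.mulRight_apply,
    LinearEquiv.coe_coe, coe_opLinearEquiv, one_mul] using h

lemma aux_adMap_smul_one_mk (a : A) (x : X) :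
    adMap k A a • (Ind.mk 1 x : Ind k A X) = Ind.mk 1 (a • x) := by
  rw [aux_adMap_repr a (ℛ k a), Finset.sum_smul]
  have step : ∀ i ∈ (ℛ k a).index,
      ((ℛ k a).left i ⊗ₜ[k] op (antipode (R := k) ((ℛ k a).right i))) • (Ind.mk 1 x : Ind k A X)
      = ∑ j ∈ (ℛ k ((ℛ k a).left i)).index,
          Ind.mk ((ℛ k ((ℛ k a).left i)).right j * antipode (R := k) ((ℛ k a).right i))
            ((ℛ k ((ℛ k a).left i)).left j • x) := by
    intro i _
    rw [Ind.tmul_smul_ind, Ind.mop_smul_mk, unop_op, one_mul,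
      Ind.smul_mk _ (ℛ k ((ℛ k a).left i))]
  rw [Finset.sum_congr rfl step]
  show (∑ i ∈ (ℛ k a).index, ∑ j ∈ (ℛ k ((ℛ k a).left i)).index,
      ((ℛ k ((ℛ k a).left i)).right j * antipode (R := k) ((ℛ k a).right i)) ⊗ₜ[k]
        ((ℛ k ((ℛ k a).left i)).left j • x) : A ⊗[k] X) = (1 : A) ⊗ₜ[k] (a • x)
  exact aux_key2X a (ℛ k a) (fun i => ℛ k ((ℛ k a).left i)) x

end

end Aux
noncomputable section Maps
variable {k A : Type} [Field k] [Ring A] [HopfAlgebra k A]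
variable {X Y : Type} [AddCommGroup X] [Module k X] [Module A X] [IsScalarTower k A X]
variable [AddCommGroup Y] [Module k Y] [Module A Y] [IsScalarTower k A Y]

/-- auxiliary: the underlying `k`-linear map of `indHom`. -/
def indHomAux (f : X →ₗ[A] Y) : (Ind k A X) →ₗ[k] (Ind k A Y) :=
  LinearMap.lTensor A (f.restrictScalars k)

lemma indHomAux_mk (f : X →ₗ[A] Y) (u : A) (x : X) :
    indHomAux f (Ind.mk u x) = (Ind.mk u (f x) : Ind k A Y) := rfl

lemma indHomAux_mop (f : X →ₗ[A] Y) (q : Aᵐᵒᵖ) (n : Ind k A X) :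
    indHomAux f (q • n) = q • indHomAux f n := by
  induction n using Ind.induction_on with
  | zero => rw [smul_zero, map_zero, smul_zero]
  | tmul u x => rw [Ind.mop_smul_mk, indHomAux_mk, indHomAux_mk, Ind.mop_smul_mk]
  | add m n hm hn => rw [smul_add, map_add, hm, hn, map_add, smul_add]

lemma indHomAux_smulA (f : X →ₗ[A] Y) (p : A) (n : Ind k A X) :
    indHomAux f (p • n) = p • indHomAux f n := by
  induction n using Ind.induction_on with
  | zero => rw [smul_zero, map_zero, smul_zero]
  | tmul u x =>
      rw [Ind.smul_mk p (ℛ k p), map_sum, indHomAux_mk, Ind.smul_mk p (ℛ k p)]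
      refine Finset.sum_congr rfl fun i _ => ?_
      rw [indHomAux_mk, map_smul]
  | add m n hm hn => rw [smul_add, map_add, hm, hn, map_add, smul_add]

/-- The functorial map `Ind X → Ind Y`, `A ⊗ Aᵐᵒᵖ`-linearly. -/
def indHom (f : X →ₗ[A] Y) : Ind k A X →ₗ[A ⊗[k] Aᵐᵒᵖ] Ind k A Y where
  toFun := indHomAux f
  map_add' := (indHomAux f).map_add
  map_smul' := by
    intro e n
    simp only [RingHom.id_apply]
    induction e using TensorProduct.induction_on with
    | zero => erw [zero_smul (A ⊗[k] Aᵐᵒᵖ) n, zero_smul (A ⊗[k] Aᵐᵒᵖ) (indHomAux f n), map_zero]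
    | add e₁ e₂ h₁ h₂ => rw [add_smul, add_smul, map_add, h₁, h₂]
    | tmul p q =>
        rw [Ind.tmul_smul_ind, Ind.tmul_smul_ind, indHomAux_smulA, indHomAux_mop]

lemma indHom_mk (f : X →ₗ[A] Y) (u : A) (x : X) :
    indHom (k := k) f (Ind.mk u x) = (Ind.mk u (f x) : Ind k A Y) := rfl

lemma indHom_injective (f : X →ₗ[A] Y) (hf : Function.Injective f) :
    Function.Injective (indHom (k := k) f) :=
  Module.Flat.lTensor_preserves_injective_linearMap (M := A) (f.restrictScalars k) hf

variable (M : Type) [AddCommGroup M] [Module (A ⊗[k] Aᵐᵒᵖ) M]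

/-- auxiliary additive lift for `indLift`. -/
def indLiftAdd (ψ : X → M) (hadd : ∀ x y, ψ (x + y) = ψ x + ψ y)
    (hsm : ∀ (a : A) (x : X), ψ (a • x) = adMap k A a • ψ x) :
    (A ⊗[k] X) →+ M :=
  TensorProduct.liftAddHom
    (AddMonoidHom.mk'
      (fun u => AddMonoidHom.mk' (fun x => ((1 : A) ⊗ₜ[k] op u) • ψ x)
        (fun x y => by
          show ((1 : A) ⊗ₜ[k] op u) • ψ (x + y)
              = ((1 : A) ⊗ₜ[k] op u) • ψ x + ((1 : A) ⊗ₜ[k] op u) • ψ y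
          rw [hadd, smul_add]))
      (fun u v => by
        ext x
        simp only [AddMonoidHom.mk'_apply, AddMonoidHom.add_apply]
        rw [MulOpposite.op_add, TensorProduct.tmul_add, add_smul]))
    (by
      intro c u x
      simp only [AddMonoidHom.mk'_apply]
      have h1 : ((1 : A) ⊗ₜ[k] op (c • u) : A ⊗[k] Aᵐᵒᵖ)
          = ((1 : A) ⊗ₜ[k] op u) * algebraMap k (A ⊗[k] Aᵐᵒᵖ) c := by
        rw [Algebra.TensorProduct.algebraMap_apply' (A := A), Algebra.smul_def,
          MulOpposite.op_mul, Algebra.TensorProduct.tmul_mul_tmul, one_mul,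
          MulOpposite.algebraMap_apply]
      have h2 : ψ (c • x) = algebraMap k (A ⊗[k] Aᵐᵒᵖ) c • ψ x := by
        rw [← algebraMap_smul A c x, hsm, aux_adMap_algebraMap]
      rw [h1, h2, mul_smul])

lemma indLiftAdd_mk (ψ : X → M) (hadd : ∀ x y, ψ (x + y) = ψ x + ψ y)
    (hsm : ∀ (a : A) (x : X), ψ (a • x) = adMap k A a • ψ x) (u : A) (x : X) :
    indLiftAdd M ψ hadd hsm (Ind.mk u x) = ((1 : A) ⊗ₜ[k] op u) • ψ x :=
  TensorProduct.liftAddHom_tmul _ _ u x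

lemma indLiftAdd_tmul_smul (ψ : X → M) (hadd : ∀ x y, ψ (x + y) = ψ x + ψ y)
    (hsm : ∀ (a : A) (x : X), ψ (a • x) = adMap k A a • ψ x)
    (p : A) (q : Aᵐᵒᵖ) (u : A) (x : X) :
    indLiftAdd M ψ hadd hsm ((p ⊗ₜ[k] q) • (Ind.mk u x : Ind k A X))
      = (p ⊗ₜ[k] q) • indLiftAdd M ψ hadd hsm (Ind.mk u x) := by
  rw [Ind.tmul_smul_ind, Ind.mop_smul_mk, Ind.smul_mk p (ℛ k p)]
  erw [map_sum]
  have step : ∀ i ∈ (ℛ k p).index,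
      indLiftAdd M ψ hadd hsm (Ind.mk ((ℛ k p).right i * (u * unop q)) ((ℛ k p).left i • x))
      = ∑ j ∈ (ℛ k ((ℛ k p).left i)).index,
          ((((ℛ k ((ℛ k p).left i)).left j) ⊗ₜ[k]
            op (antipode (R := k) ((ℛ k ((ℛ k p).left i)).right j)
              * (ℛ k p).right i * (u * unop q))) : A ⊗[k] Aᵐᵒᵖ) • ψ x := by
    intro i _
    rw [indLiftAdd_mk, hsm, aux_adMap_repr ((ℛ k p).left i) (ℛ k ((ℛ k p).left i)),
      Finset.sum_smul, Finset.smul_sum]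
    refine Finset.sum_congr rfl fun j _ => ?_
    rw [smul_smul, Algebra.TensorProduct.tmul_mul_tmul, one_mul, ← MulOpposite.op_mul,
      mul_assoc]
  rw [Finset.sum_congr rfl step]
  simp_rw [← Finset.sum_smul]
  rw [aux_key1E p (ℛ k p) (fun i => ℛ k ((ℛ k p).left i)) (u * unop q)]
  rw [indLiftAdd_mk, smul_smul, Algebra.TensorProduct.tmul_mul_tmul, mul_one]
  have hq : op (u * unop q) = q * op u := by
    rw [MulOpposite.op_mul, MulOpposite.op_unop]
  rw [hq]

/-- Lift of a twisted-linear map `X → M` to an `A ⊗ Aᵐᵒᵖ`-linear map `Ind X → M`. -/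
def indLift (ψ : X → M) (hadd : ∀ x y, ψ (x + y) = ψ x + ψ y)
    (hsm : ∀ (a : A) (x : X), ψ (a • x) = adMap k A a • ψ x) :
    Ind k A X →ₗ[A ⊗[k] Aᵐᵒᵖ] M where
  toFun := indLiftAdd M ψ hadd hsm
  map_add' := map_add _
  map_smul' := by
    intro e n
    simp only [RingHom.id_apply]
    induction e using TensorProduct.induction_on with
    | zero => erw [zero_smul (A ⊗[k] Aᵐᵒᵖ) n, zero_smul (A ⊗[k] Aᵐᵒᵖ) (indLiftAdd M ψ hadd hsm n), map_zero]
    | add e₁ e₂ h₁ h₂ => erw [add_smul, add_smul, map_add, h₁, h₂]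
    | tmul p q =>
        induction n using Ind.induction_on with
        | zero => erw [smul_zero, map_zero, smul_zero]
        | add m n hm hn => erw [smul_add, map_add, hm, hn, map_add, smul_add]
        | tmul u x => exact indLiftAdd_tmul_smul M ψ hadd hsm p q u x

lemma indLift_mk (ψ : X → M) (hadd : ∀ x y, ψ (x + y) = ψ x + ψ y)
    (hsm : ∀ (a : A) (x : X), ψ (a • x) = adMap k A a • ψ x) (u : A) (x : X) :
    indLift M ψ hadd hsm (Ind.mk u x) = ((1 : A) ⊗ₜ[k] op u) • ψ x :=
  indLiftAdd_mk M ψ hadd hsm u x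

end Maps
noncomputable section

variable (k A : Type) [Field k] [Ring A] [HopfAlgebra k A]

theorem adjoint_of_injective_is_injective
    (hS : Function.Bijective (HopfAlgebra.antipode (R := k) (A := A)))
    (M : Type) [AddCommGroup M] [Module (A ⊗[k] Aᵐᵒᵖ) M]
    (instL : Module A M)
    (hL : ∀ (a : A) (m : M), (letI := instL; a • m) = adMap k A a • m)
    (hM : Injective (ModuleCat.of (A ⊗[k] Aᵐᵒᵖ) M)) :
    Injective (@ModuleCat.of A _ M _ instL) := by
  haveI hME : Module.Injective (A ⊗[k] Aᵐᵒᵖ) M :=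
    Module.injective_module_of_injective_object _ _ (inj := hM)
  letI := instL
  refine Module.injective_object_of_injective_module (R := A) (M := M) (inj := ?_)
  constructor
  intro X Y _ _ _ _ f hf g
  letI : Module k X := Module.compHom X (algebraMap k A)
  letI : Module k Y := Module.compHom Y (algebraMap k A)
  haveI : IsScalarTower k A X := ⟨fun c a x => by
    rw [Algebra.smul_def, mul_smul]; rfl⟩
  haveI : IsScalarTower k A Y := ⟨fun c a y => by
    rw [Algebra.smul_def, mul_smul]; rfl⟩
  have hsmg : ∀ (a : A) (x : X), g (a • x) = adMap k A a • g x := fun a x => by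
    rw [map_smul]
    exact hL a (g x)
  obtain ⟨h, hh⟩ := hME.out (indHom (k := k) f) (indHom_injective f hf)
      (indLift (k := k) M g (fun x y => map_add g x y) hsmg)
  refine ⟨{ toFun := fun y => h (Ind.mk 1 y)
            map_add' := fun y z => by
              show h (Ind.mk 1 (y + z)) = h (Ind.mk 1 y) + h (Ind.mk 1 z)
              rw [show (Ind.mk (1 : A) (y + z) : Ind k A Y) = Ind.mk 1 y + Ind.mk 1 z from
                TensorProduct.tmul_add 1 y z, map_add]
            map_smul' := fun a y => by
              show h (Ind.mk 1 (a • y)) = a • h (Ind.mk 1 y)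
              rw [show (Ind.mk (1 : A) (a • y) : Ind k A Y) = adMap k A a • Ind.mk 1 y from
                (aux_adMap_smul_one_mk a y).symm, map_smul]
              exact (hL a _).symm }, fun x => ?_⟩
  show h (Ind.mk 1 (f x)) = g x
  have h1 : (Ind.mk (1 : A) (f x) : Ind k A Y) = indHom (k := k) f (Ind.mk 1 x) := rfl
  rw [h1, hh, indLift_mk]
  rw [show ((1 : A) ⊗ₜ[k] op (1 : A) : A ⊗[k] Aᵐᵒᵖ) = 1 by
    rw [MulOpposite.op_one, Algebra.TensorProduct.one_def], one_smul]

end
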